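/- arXiv:1210.2773 — 2 statements merged into one kernel-verified Lean document; each statement's English description precedes it below -/
import Mathlib

section
/- Let p ≡ 2 (mod 3) be a prime, and let K be a Galois cubic extension of ℚ (i.e., Gal(K/ℚ) ≅ C₃). Then the p-rank of the class group of K, defined as dim_{𝔽_p}(Cl(K)/p·Cl(K)), is even. -/
open NumberField Module Ideal

set_option maxHeartbeats 1000000
set_option synthInstance.maxHeartbeats 400000
set_option linter.unusedSectionVars false
open scoped nonZeroDivisors

section NT

variable (K : Type) [Field K] [NumberField K] [IsGalois ℚ K]

local notation "R" => 𝓞 K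
local notation "G" => K ≃ₐ[ℚ] K

noncomputable def eR (τ : G) : R ≃+* R := (galRestrict ℤ ℚ K (𝓞 K) τ : (𝓞 K) ≃ₐ[ℤ] (𝓞 K)).toRingEquiv

noncomputable def Imap (τ : G) (I : Ideal R) : Ideal R := Ideal.map (eR K τ : R →+* R) I

lemma eR_mul (τ τ' : G) (x : R) : eR K (τ * τ') x = eR K τ (eR K τ' x) := by
  simp only [eR, AlgEquiv.toRingEquiv_eq_coe, AlgEquiv.coe_ringEquiv]
  rw [(galRestrict ℤ ℚ K (𝓞 K)).map_mul τ τ', AlgEquiv.mul_apply]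

lemma eR_one (x : R) : eR K 1 x = x := by
  simp only [eR, AlgEquiv.toRingEquiv_eq_coe, AlgEquiv.coe_ringEquiv]
  rw [(galRestrict ℤ ℚ K (𝓞 K)).map_one, AlgEquiv.one_apply]

lemma eR_natCast (τ : G) (n : ℕ) : eR K τ (n : R) = (n : R) := map_natCast _ n

lemma Imap_mul (τ : G) (I J : Ideal R) : Imap K τ (I * J) = Imap K τ I * Imap K τ J :=
  Ideal.map_mul _ I J

lemma Imap_comp (τ τ' : G) (I : Ideal R) : Imap K τ (Imap K τ' I) = Imap K (τ * τ') I := by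
  unfold Imap
  rw [Ideal.map_map]
  congr 1
  exact RingHom.ext fun x => (eR_mul K τ τ' x).symm

lemma Imap_one (I : Ideal R) : Imap K 1 I = I := by
  unfold Imap
  have : ((eR K 1 : R ≃+* R) : R →+* R) = RingHom.id R :=
    RingHom.ext fun x => eR_one K x
  rw [this, Ideal.map_id]

lemma Imap_top (τ : G) : Imap K τ ⊤ = ⊤ := Ideal.map_top _

lemma Imap_ne_bot (τ : G) {I : Ideal R} (hI : I ≠ ⊥) : Imap K τ I ≠ ⊥ := by
  intro h
  apply hI
  have := congrArg (Imap K τ⁻¹) h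
  rw [Imap_comp, inv_mul_cancel, Imap_one] at this
  rw [this]
  unfold Imap
  exact Ideal.map_bot

lemma Imap_isPrime (τ : G) {P : Ideal R} (hP : P.IsPrime) : (Imap K τ P).IsPrime := by
  unfold Imap
  exact Ideal.map_isPrime_of_equiv (eR K τ)

lemma Imap_absNorm (τ : G) (I : Ideal R) : absNorm (Imap K τ I) = absNorm I := by
  unfold Imap
  rw [absNorm_apply, absNorm_apply, Submodule.cardQuot_apply, Submodule.cardQuot_apply]
  exact (Nat.card_congr (Ideal.quotientEquiv I _ (eR K τ) rfl).toEquiv).symm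

lemma Imap_mem (τ : G) {I : Ideal R} {x : R} (hx : x ∈ I) : eR K τ x ∈ Imap K τ I :=
  Ideal.mem_map_of_mem _ hx

lemma exists_conj (q : ℕ) (hq : q.Prime) (P Q : Ideal R)
    (hP : P.IsPrime) (hQ : Q.IsPrime) (hP0 : P ≠ ⊥) (hQ0 : Q ≠ ⊥)
    (hqP : (q : R) ∈ P) (hqQ : (q : R) ∈ Q) : ∃ τ : G, Q = Imap K τ P := by
  classical
  by_contra hcon
  push_neg at hcon
  have hQm : Q.IsMaximal := Ideal.IsPrime.isMaximal hQ hQ0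
  have hIm : ∀ τ : G, (Imap K τ P).IsPrime := fun τ => Imap_isPrime K τ hP
  have hnle : ∀ τ : G, ¬ (Q ≤ Imap K τ P) := by
    intro τ hle
    exact hcon τ (hQm.eq_of_le (hIm τ).ne_top hle)
  -- Q is not contained in the union of the conjugates
  have hnsub : ¬ ((Q : Set R) ⊆ ⋃ τ ∈ ((Finset.univ : Finset G) : Set G), ((Imap K τ P : Ideal R) : Set R)) := by
    intro hsub
    rw [Ideal.subset_union_prime 1 1 (fun i _ _ _ => hIm i)] at hsub
    obtain ⟨τ, _, hle⟩ := hsub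
    exact hnle τ hle
  obtain ⟨x, hxQ, hxn⟩ := Set.not_subset.mp hnsub
  simp only [Set.mem_iUnion, not_exists, Finset.coe_univ, Set.mem_univ] at hxn
  have hxn : ∀ τ : G, x ∉ Imap K τ P := by
    intro τ hmem
    exact hxn τ trivial hmem
  -- the norm of x
  obtain ⟨n, hnorm⟩ : ∃ n : ℤ, (∏ σ : G, galRestrict ℤ ℚ K (𝓞 K) σ x) = algebraMap ℤ R n :=
    ⟨_, prod_galRestrict_eq_norm ℤ ℚ K (𝓞 K) x⟩
  -- the product over all galois elements
  have hprodQ : (∏ σ : G, galRestrict ℤ ℚ K (𝓞 K) σ x) ∈ Q := by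
    rw [Ideal.IsPrime.prod_mem_iff]
    exact ⟨1, Finset.mem_univ 1, by rw [show (galRestrict ℤ ℚ K (𝓞 K) 1 x) = x from eR_one K x]; exact hxQ⟩
  rw [hnorm] at hprodQ
  -- transfer to P via the prime q
  have hspanq_max : (Ideal.span {(q:ℤ)}).IsMaximal := by
    apply PrincipalIdealRing.isMaximal_of_irreducible
    exact (Int.prime_iff_natAbs_prime.mpr (by simpa using hq)).irreducible
  have hcomap : Ideal.span {(q:ℤ)} = Ideal.comap (algebraMap ℤ R) Q := by
    apply hspanq_max.eq_of_le
    · haveI := hQ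
      exact (Ideal.IsPrime.comap (algebraMap ℤ R) (K := Q)).ne_top
    · rw [Ideal.span_le, Set.singleton_subset_iff]
      show algebraMap ℤ R (q:ℤ) ∈ Q
      rwa [map_natCast]
  have hnq : n ∈ Ideal.span {(q:ℤ)} := by
    rw [hcomap]
    exact hprodQ
  have hnP : algebraMap ℤ R n ∈ P := by
    have hle : Ideal.span {(q:ℤ)} ≤ Ideal.comap (algebraMap ℤ R) P := by
      rw [Ideal.span_le, Set.singleton_subset_iff]
      show algebraMap ℤ R (q:ℤ) ∈ P
      rwa [map_natCast]
    exact hle hnq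
  rw [← hnorm] at hnP
  rw [Ideal.IsPrime.prod_mem_iff] at hnP
  obtain ⟨σ, _, hσP⟩ := hnP
  apply hxn σ⁻¹
  have : eR K σ⁻¹ (eR K σ x) ∈ Imap K σ⁻¹ P := Imap_mem K σ⁻¹ hσP
  rwa [← eR_mul, inv_mul_cancel, eR_one] at this

lemma prime_principal (hrank : Module.finrank ℤ R = 3)
    (hG : Nat.card G = 3) (σ : G) (hσ : orderOf σ = 3)
    (P : Ideal R) (hP : P.IsPrime) (hP0 : P ≠ ⊥) :
    Submodule.IsPrincipal (P * Imap K σ P * Imap K (σ * σ) P) := by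
  classical
  -- find a rational prime q in P
  have habs0 : absNorm P ≠ 0 :=
    absNorm_ne_zero_iff_mem_nonZeroDivisors.mpr (mem_nonZeroDivisors_iff_ne_zero.mpr hP0)
  set c : Ideal ℤ := Ideal.comap (algebraMap ℤ R) P with hc
  haveI : c.IsPrime := Ideal.IsPrime.comap _
  have hcbot : c ≠ ⊥ := by
    intro hbot
    have hmem : ((absNorm P : ℤ)) ∈ c := by
      show algebraMap ℤ R (absNorm P : ℤ) ∈ P
      rw [map_natCast]
      exact absNorm_mem P
    rw [hbot] at hmem
    simp only [Ideal.mem_bot] at hmem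
    exact habs0 (by exact_mod_cast hmem)
  obtain ⟨g, hgc⟩ := (IsPrincipalIdealRing.principal c).principal
  have hg0 : g ≠ 0 := by
    intro h; apply hcbot; rw [hgc, h]; simp
  have hgprime : Prime g := by
    have := ‹c.IsPrime›
    rw [hgc] at this
    exact (Ideal.span_singleton_prime hg0).mp this
  set q : ℕ := g.natAbs with hqdef
  have hq : q.Prime := Int.prime_iff_natAbs_prime.mp hgprime
  have hqP : (q : R) ∈ P := by
    have hgP : algebraMap ℤ R g ∈ P := by
      have : g ∈ c := by rw [hgc]; exact Ideal.subset_span rfl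
      exact this
    have : ((q : ℤ) : R) ∈ P := by
      rcases Int.natAbs_eq g with h | h
      · rw [← h]; exact_mod_cast hgP
      · have : algebraMap ℤ R (-g) ∈ P := by
          rw [map_neg]; exact neg_mem hgP
        rw [show ((q:ℤ)) = -g by omega] at *
        exact_mod_cast this
    exact_mod_cast this
  set Φ : Ideal R := Ideal.span {(q : R)} with hΦ
  have hΦnorm : absNorm Φ = q ^ 3 := by
    rw [hΦ, absNorm_span_singleton]
    have hb := Algebra.norm_algebraMap_of_basis (Module.Free.chooseBasis ℤ (𝓞 K)) (q:ℤ)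
    rw [Module.finrank_eq_card_chooseBasisIndex ℤ (𝓞 K)] at hrank
    rw [show ((q:R)) = algebraMap ℤ R (q:ℤ) from (map_natCast _ q).symm, hb, hrank,
      Int.natAbs_pow]
    simp
  have hq0R : (q : R) ≠ 0 := Nat.cast_ne_zero.mpr hq.ne_zero
  have hΦbot : Φ ≠ ⊥ := by
    rw [hΦ, Ne, Ideal.span_singleton_eq_bot]
    exact hq0R
  have hΦP : Φ ≤ P := by
    rw [hΦ, Ideal.span_le, Set.singleton_subset_iff]
    exact hqP
  -- absNorm P = q ^ f
  obtain ⟨f, hf3, hPf⟩ := (Nat.dvd_prime_pow hq).mp (hΦnorm ▸ absNorm_dvd_absNorm_of_le hΦP)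
  have hf0 : f ≠ 0 := by
    intro h
    rw [h, pow_zero] at hPf
    apply hP.ne_top
    rw [Ideal.eq_top_iff_one]
    have := absNorm_mem P
    rw [hPf] at this
    exact_mod_cast this
  have hqIm : ∀ τ : G, (q : R) ∈ Imap K τ P := by
    intro τ
    have := Imap_mem K τ hqP
    rwa [eR_natCast] at this
  have htrans : ∀ Q : Ideal R, Q.IsPrime → Q ≠ ⊥ → (q : R) ∈ Q → ∃ τ : G, Q = Imap K τ P :=
    fun Q h1 h2 h3 => exists_conj K q hq P Q hP h1 hP0 h2 hqP h3
  by_cases h1 : Imap K σ P = P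
  · -- P is fixed by σ, hence by everything
    have hzp : Subgroup.zpowers σ = ⊤ := by
      apply Subgroup.eq_top_of_card_eq
      rw [Nat.card_zpowers, hσ, hG]
    have halln : ∀ n : ℕ, Imap K (σ ^ n) P = P := by
      intro n
      induction n with
      | zero => rw [pow_zero, Imap_one]
      | succ n ih =>
        rw [pow_succ, ← Imap_comp, h1, ih]
    have hall : ∀ τ : G, Imap K τ P = P := by
      intro τ
      have hτ : τ ∈ Subgroup.zpowers σ := hzp ▸ Subgroup.mem_top τ
      rw [← mem_powers_iff_mem_zpowers] at hτ
      obtain ⟨n, rfl⟩ := hτ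
      exact halln n
    rw [hall σ, hall (σ * σ)]
    -- peeling: every ideal between Φ and ⊤ is a power of P
    have peel : ∀ N : ℕ, ∀ C : Ideal R, absNorm C = N → Φ ≤ C → ∃ k, C = P ^ k := by
      intro N
      induction N using Nat.strong_induction_on with
      | _ N ih =>
        intro C hCN hΦC
        by_cases hCtop : C = ⊤
        · exact ⟨0, by rw [hCtop, pow_zero, Ideal.one_eq_top]⟩
        · obtain ⟨M, hMmax, hCM⟩ := Ideal.exists_le_maximal C hCtop
          have hMbot : M ≠ ⊥ := by
            intro h
            apply hΦbot
            rw [eq_bot_iff]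
            exact le_trans (le_trans hΦC hCM) (le_of_eq h)
          have hqM : (q : R) ∈ M := hCM (hΦC (Ideal.subset_span rfl))
          obtain ⟨τ, hτ⟩ := htrans M hMmax.isPrime hMbot hqM
          rw [hall τ] at hτ
          have hPC : P ∣ C := Ideal.dvd_iff_le.mpr (hτ ▸ hCM)
          obtain ⟨C', rfl⟩ := hPC
          have hC'bot : C' ≠ ⊥ := by
            intro h
            apply hΦbot
            rw [eq_bot_iff]
            refine le_trans hΦC ?_
            rw [h, mul_bot]
          have hΦC' : Φ ≤ C' := le_trans hΦC Ideal.mul_le_right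
          have hC'N : absNorm C' < N := by
            rw [← hCN, _root_.map_mul Ideal.absNorm]
            have h1lt : 1 < absNorm P := by
              rw [hPf]
              exact Nat.one_lt_pow hf0 hq.one_lt
            have hC'0 : 0 < absNorm C' :=
              Nat.pos_of_ne_zero (absNorm_ne_zero_iff_mem_nonZeroDivisors.mpr
                (mem_nonZeroDivisors_iff_ne_zero.mpr hC'bot))
            calc absNorm C' = 1 * absNorm C' := (one_mul _).symm
              _ < absNorm P * absNorm C' := by
                  exact (Nat.mul_lt_mul_right hC'0).mpr h1lt
          obtain ⟨k, rfl⟩ := ih _ hC'N C' rfl hΦC'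
          exact ⟨k + 1, by rw [pow_succ']⟩
    obtain ⟨e, hΦe⟩ := peel (absNorm Φ) Φ rfl le_rfl
    have hfe : f * e = 3 := by
      have : (q:ℕ) ^ (f * e) = q ^ 3 := by
        rw [pow_mul, ← hPf, ← _root_.map_pow Ideal.absNorm, ← hΦe, hΦnorm]
      exact Nat.pow_right_injective hq.two_le this
    have he : e = 1 ∨ e = 3 :=
      (Nat.prime_three).eq_one_or_self_of_dvd e ⟨f, by rw [← hfe]; ring⟩
    rcases he with he | he
    · -- P = Φ
      rw [he, pow_one] at hΦe
      rw [← hΦe, hΦ, Ideal.span_singleton_mul_span_singleton,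
        Ideal.span_singleton_mul_span_singleton]
      exact ⟨⟨_, rfl⟩⟩
    · -- P ^ 3 = Φ
      rw [he] at hΦe
      have : P * P * P = Φ := by rw [hΦe]; ring
      rw [this, hΦ]
      exact ⟨⟨_, rfl⟩⟩
  · -- the three conjugates are distinct
    have hσ3 : σ ^ 3 = 1 := by rw [← hσ]; exact pow_orderOf_eq_one σ
    have hinv : σ * σ = σ⁻¹ := by
      apply eq_inv_of_mul_eq_one_left
      have h33 : σ * σ * σ = σ ^ 3 := by rw [pow_succ, pow_succ, pow_one]
      rw [h33, hσ3]
    have hImapinj : ∀ I J : Ideal R, Imap K σ I = Imap K σ J → I = J := by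
      intro I J h
      have := congrArg (Imap K σ⁻¹) h
      rwa [Imap_comp, Imap_comp, inv_mul_cancel, Imap_one, Imap_one] at this
    have hP2P3 : Imap K σ P ≠ Imap K (σ * σ) P := by
      intro h
      rw [← Imap_comp] at h
      exact h1 (hImapinj _ _ h).symm
    have hPP3 : P ≠ Imap K (σ * σ) P := by
      intro h
      apply h1
      rw [hinv] at h
      have := congrArg (Imap K σ) h
      rwa [Imap_comp, mul_inv_cancel, Imap_one] at this
    -- maximality
    have hPmax : P.IsMaximal := Ideal.IsPrime.isMaximal hP hP0
    have hP2max : (Imap K σ P).IsMaximal :=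
      Ideal.IsPrime.isMaximal (Imap_isPrime K σ hP) (Imap_ne_bot K σ hP0)
    have hP3max : (Imap K (σ * σ) P).IsMaximal :=
      Ideal.IsPrime.isMaximal (Imap_isPrime K _ hP) (Imap_ne_bot K _ hP0)
    have hcop12 : IsCoprime P (Imap K σ P) :=
      Ideal.isCoprime_iff_sup_eq.mpr
        (Ideal.IsMaximal.coprime_of_ne hPmax hP2max (fun h => h1 h.symm))
    have hcop13 : IsCoprime P (Imap K (σ * σ) P) :=
      Ideal.isCoprime_iff_sup_eq.mpr (Ideal.IsMaximal.coprime_of_ne hPmax hP3max hPP3)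
    have hcop23 : IsCoprime (Imap K σ P) (Imap K (σ * σ) P) :=
      Ideal.isCoprime_iff_sup_eq.mpr (Ideal.IsMaximal.coprime_of_ne hP2max hP3max hP2P3)
    have hd1 : P ∣ Φ := Ideal.dvd_iff_le.mpr hΦP
    have hd2 : Imap K σ P ∣ Φ := Ideal.dvd_iff_le.mpr (by
      rw [hΦ, Ideal.span_le, Set.singleton_subset_iff]; exact hqIm σ)
    have hd3 : Imap K (σ * σ) P ∣ Φ := Ideal.dvd_iff_le.mpr (by
      rw [hΦ, Ideal.span_le, Set.singleton_subset_iff]; exact hqIm (σ * σ))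
    have hdvd : P * Imap K σ P * Imap K (σ * σ) P ∣ Φ :=
      (hcop13.mul_left hcop23).mul_dvd (hcop12.mul_dvd hd1 hd2) hd3
    obtain ⟨C, hC⟩ := hdvd
    have hnorms : q ^ 3 = q ^ (3 * f) * absNorm C := by
      rw [← hΦnorm, hC, _root_.map_mul Ideal.absNorm, _root_.map_mul Ideal.absNorm,
        _root_.map_mul Ideal.absNorm, Imap_absNorm, Imap_absNorm, hPf]
      ring
    have hf1 : f = 1 := by
      have hdvd3 : q ^ (3 * f) ∣ q ^ 3 := ⟨absNorm C, hnorms⟩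
      have := (Nat.pow_dvd_pow_iff_le_right hq.one_lt).mp hdvd3
      omega
    have hC1 : absNorm C = 1 := by
      rw [hf1, mul_one] at hnorms
      have hq3 : 0 < q ^ 3 := Nat.pow_pos hq.pos
      nlinarith [hnorms]
    have hCtop : C = ⊤ := by
      rw [Ideal.eq_top_iff_one]
      have := absNorm_mem C
      rw [hC1] at this
      exact_mod_cast this
    rw [hCtop, mul_top] at hC
    rw [← hC, hΦ]
    exact ⟨⟨_, rfl⟩⟩

lemma triple_principal (hrank : Module.finrank ℤ R = 3)
    (hG : Nat.card G = 3) (σ : G) (hσ : orderOf σ = 3) :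
    ∀ I : Ideal R, I ≠ ⊥ → Submodule.IsPrincipal (I * Imap K σ I * Imap K (σ * σ) I) := by
  intro I
  induction I using UniqueFactorizationMonoid.induction_on_prime with
  | h₁ => intro h; exact absurd rfl h
  | h₂ I hI =>
    intro _
    rw [Ideal.isUnit_iff] at hI
    rw [hI, Imap_top, Imap_top, mul_top, mul_top]
    exact ⟨⟨1, (Ideal.span_singleton_one).symm⟩⟩
  | h₃ a p ha hp ih =>
    intro _
    have hane : a ≠ ⊥ := ha
    have hpne : p ≠ ⊥ := hp.ne_zero
    have hpprime : p.IsPrime := (Ideal.prime_iff_isPrime hpne).mp hp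
    obtain ⟨x, hx⟩ := prime_principal K hrank hG σ hσ p hpprime hpne
    obtain ⟨y, hy⟩ := ih hane
    refine ⟨⟨x * y, ?_⟩⟩
    rw [Imap_mul, Imap_mul]
    have : p * a * (Imap K σ p * Imap K σ a) * (Imap K (σ * σ) p * Imap K (σ * σ) a)
        = (p * Imap K σ p * Imap K (σ * σ) p) * (a * Imap K σ a * Imap K (σ * σ) a) := by
      ring
    rw [this, hx, hy]
    exact Ideal.span_singleton_mul_span_singleton x y

noncomputable def ImapS (τ : G) (I : (Ideal R)⁰) : (Ideal R)⁰ :=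
  ⟨Imap K τ I.1, mem_nonZeroDivisors_iff_ne_zero.mpr
    (Imap_ne_bot K τ (mem_nonZeroDivisors_iff_ne_zero.mp I.2))⟩

lemma ImapS_mul (τ : G) (I J : (Ideal R)⁰) :
    ImapS K τ (I * J) = ImapS K τ I * ImapS K τ J := by
  apply Subtype.ext
  show Imap K τ (I.1 * J.1) = Imap K τ I.1 * Imap K τ J.1
  exact Imap_mul K τ _ _

lemma ImapS_comp (τ τ' : G) (I : (Ideal R)⁰) :
    ImapS K τ (ImapS K τ' I) = ImapS K (τ * τ') I := by
  apply Subtype.ext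
  exact Imap_comp K τ τ' I.1

lemma ImapS_one (I : (Ideal R)⁰) : ImapS K 1 I = I := by
  apply Subtype.ext
  exact Imap_one K I.1

lemma mk0_ImapS_congr (τ : G) {I J : (Ideal R)⁰} (h : ClassGroup.mk0 I = ClassGroup.mk0 J) :
    ClassGroup.mk0 (ImapS K τ I) = ClassGroup.mk0 (ImapS K τ J) := by
  rw [ClassGroup.mk0_eq_mk0_iff] at h ⊢
  obtain ⟨x, y, hx, hy, hxy⟩ := h
  refine ⟨eR K τ x, eR K τ y, ?_, ?_, ?_⟩
  · intro h; exact hx ((eR K τ).injective (by rw [h, map_zero]))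
  · intro h; exact hy ((eR K τ).injective (by rw [h, map_zero]))
  · have := congrArg (Imap K τ) hxy
    rw [Imap_mul, Imap_mul] at this
    have hspanx : Imap K τ (Ideal.span {x}) = Ideal.span {eR K τ x} := by
      unfold Imap
      rw [Ideal.map_span, Set.image_singleton]
      rfl
    have hspany : Imap K τ (Ideal.span {y}) = Ideal.span {eR K τ y} := by
      unfold Imap
      rw [Ideal.map_span, Set.image_singleton]
      rfl
    rw [hspanx, hspany] at this
    exact this

noncomputable def gmap (τ : G) (c : ClassGroup R) : ClassGroup R :=
  ClassGroup.mk0 (ImapS K τ (ClassGroup.mk0_surjective c).choose)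

lemma gmap_mk0 (τ : G) (I : (Ideal R)⁰) :
    gmap K τ (ClassGroup.mk0 I) = ClassGroup.mk0 (ImapS K τ I) := by
  apply mk0_ImapS_congr
  exact (ClassGroup.mk0_surjective (ClassGroup.mk0 I)).choose_spec

lemma gmap_mul (τ : G) (c d : ClassGroup R) :
    gmap K τ (c * d) = gmap K τ c * gmap K τ d := by
  obtain ⟨I, rfl⟩ := ClassGroup.mk0_surjective c
  obtain ⟨J, rfl⟩ := ClassGroup.mk0_surjective d
  rw [← _root_.map_mul ClassGroup.mk0 I J, gmap_mk0, gmap_mk0, gmap_mk0, ImapS_mul,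
    _root_.map_mul ClassGroup.mk0]

lemma gmap_triple (σ : G) (hσ3 : σ ^ 3 = 1) (c : ClassGroup R) :
    gmap K σ (gmap K σ (gmap K σ c)) = c := by
  obtain ⟨I, rfl⟩ := ClassGroup.mk0_surjective c
  rw [gmap_mk0, gmap_mk0, gmap_mk0, ImapS_comp, ImapS_comp]
  have : σ * σ * σ = 1 := by rw [← hσ3, pow_succ, pow_succ, pow_one]
  rw [this, ImapS_one]

lemma gmap_rel (hrank : Module.finrank ℤ R = 3) (hG : Nat.card G = 3)
    (σ : G) (hσ : orderOf σ = 3) (c : ClassGroup R) :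
    c * gmap K σ c * gmap K σ (gmap K σ c) = 1 := by
  obtain ⟨I, rfl⟩ := ClassGroup.mk0_surjective c
  rw [gmap_mk0, gmap_mk0, ImapS_comp,
    ← _root_.map_mul ClassGroup.mk0, ← _root_.map_mul ClassGroup.mk0]
  have hprin := triple_principal K hrank hG σ hσ I.1
    (mem_nonZeroDivisors_iff_ne_zero.mp I.2)
  have : (I * ImapS K σ I * ImapS K (σ * σ) I : (Ideal R)⁰)
      = ⟨I.1 * Imap K σ I.1 * Imap K (σ * σ) I.1,
          (I * ImapS K σ I * ImapS K (σ * σ) I).2⟩ := rfl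
  rw [this]
  exact (ClassGroup.mk0_eq_one_iff _).mpr hprin

end NT


lemma aux_two_pow_mod_three {r : ℕ} (h : 2 ^ r % 3 = 1) : Even r := by
  rcases Nat.even_or_odd r with he | ho
  · exact he
  · exfalso
    obtain ⟨k, rfl⟩ := ho
    have h4 : (4:ℕ) ^ k ≡ 1 [MOD 3] := by
      calc (4:ℕ)^k ≡ 1^k [MOD 3] := Nat.ModEq.pow k (by decide)
        _ = 1 := one_pow k
    have : (2:ℕ) ^ (2*k+1) ≡ 2 [MOD 3] := by
      have : (2:ℕ)^(2*k+1) = 4^k * 2 := by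
        rw [pow_succ, pow_mul]; norm_num
      rw [this]
      calc (4:ℕ)^k * 2 ≡ 1 * 2 [MOD 3] := Nat.ModEq.mul_right 2 h4
        _ = 2 := one_mul 2
    have h2 : 2 ^ (2*k+1) % 3 = 2 % 3 := this
    rw [h] at h2
    exact absurd h2 (by decide)

lemma aux_even_finrank (p : ℕ) [Fact p.Prime] (hp : p % 3 = 2)
    (V : Type) [AddCommGroup V] [Module (ZMod p) V] [Finite V]
    (S : V →ₗ[ZMod p] V)
    (h3 : S ∘ₗ (S ∘ₗ S) = LinearMap.id)
    (hrel : LinearMap.id + S + S ∘ₗ S = 0) :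
    Even (Module.finrank (ZMod p) V) := by
  classical
  have hp3 : ¬ ((p:ℕ) ∣ 3) := by
    intro hd
    rcases (Nat.prime_three).eq_one_or_self_of_dvd p hd with h | h <;> omega
  -- fixed points of S are 0
  have hfix : ∀ v : V, S v = v → v = 0 := by
    intro v hv
    have h0 : v + S v + S (S v) = 0 := by
      have := congrFun (congrArg DFunLike.coe hrel) v
      simpa using this
    rw [hv, hv] at h0
    have h3v : (3 : ZMod p) • v = 0 := by
      have : ((3:ℕ) : ZMod p) • v = (3:ℕ) • v := by rw [Nat.cast_smul_eq_nsmul]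
      rw [show ((3:ZMod p)) = ((3:ℕ) : ZMod p) by norm_num, this,
        show (3:ℕ) = 2 + 1 from rfl, add_nsmul, two_nsmul, one_nsmul]
      exact h0
    have h3ne : (3 : ZMod p) ≠ 0 := by
      rw [show ((3:ZMod p)) = ((3:ℕ) : ZMod p) by norm_num, Ne,
        ZMod.natCast_eq_zero_iff]
      exact hp3
    rcases smul_eq_zero.mp h3v with h | h
    · exact absurd h h3ne
    · exact h
  -- the linear equivalence
  set u : V ≃ₗ[ZMod p] V := LinearEquiv.ofLinear S (S ∘ₗ S) h3 (by
    rw [LinearMap.comp_assoc]; exact h3) with hu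
  set uP : Equiv.Perm V := u.toEquiv with huP
  have huP_apply : ∀ v, uP v = S v := fun v => rfl
  have huP3 : uP ^ 3 = 1 := by
    ext v
    show uP (uP (uP v)) = v
    rw [huP_apply, huP_apply, huP_apply]
    exact congrFun (congrArg DFunLike.coe h3) v
  set Gp : Subgroup (Equiv.Perm V) := Subgroup.zpowers uP with hGp
  haveI : Fact (Nat.Prime 3) := ⟨by norm_num⟩
  have hpg : IsPGroup 3 Gp := by
    intro g
    refine ⟨1, ?_⟩
    obtain ⟨n, hn⟩ := g.2
    have : (g : Equiv.Perm V) ^ (3:ℕ) ^ 1 = 1 := by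
      simp only [pow_one, ← hn]
      rw [← zpow_natCast, ← zpow_mul, mul_comm, zpow_mul, zpow_natCast, huP3, one_zpow]
    exact Subtype.ext (by push_cast; simpa using this)
  have hzero : ∀ n : ℤ, (uP ^ n) (0:V) = 0 := by
    have huP0 : uP 0 = 0 := by rw [huP_apply]; exact map_zero S
    have huPinv0 : uP⁻¹ 0 = 0 := by
      conv_lhs => rw [← huP0]
      exact uP.symm_apply_apply 0
    intro n
    induction n using Int.induction_on with
    | zero => rfl
    | succ n ih => rw [zpow_add_one]; simp only [Equiv.Perm.mul_apply, huP0, ih]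
    | pred n ih => rw [zpow_sub_one]; simp only [Equiv.Perm.mul_apply, huPinv0, ih]
  have hfp : Nat.card (MulAction.fixedPoints Gp V) = 1 := by
    rw [Nat.card_eq_one_iff_unique]
    constructor
    · constructor
      intro a b
      have ha : (a : V) = 0 := by
        have := a.2 ⟨uP, Subgroup.mem_zpowers uP⟩
        exact hfix _ (by rw [← huP_apply]; exact this)
      have hb : (b : V) = 0 := by
        have := b.2 ⟨uP, Subgroup.mem_zpowers uP⟩
        exact hfix _ (by rw [← huP_apply]; exact this)
      exact Subtype.ext (by rw [ha, hb])
    · refine ⟨⟨0, ?_⟩⟩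
      intro g
      obtain ⟨n, hn⟩ := g.2
      show (g : Equiv.Perm V) • (0:V) = 0
      rw [← hn]
      exact hzero n
  have hmod := hpg.card_modEq_card_fixedPoints V
  rw [hfp] at hmod
  haveI : Fintype V := Fintype.ofFinite V
  have hcard : Nat.card V = p ^ (Module.finrank (ZMod p) V) := by
    rw [Nat.card_eq_fintype_card, card_eq_pow_finrank (K := ZMod p) (V := V), ZMod.card]
  rw [hcard] at hmod
  have h2r : 2 ^ (Module.finrank (ZMod p) V) % 3 = 1 := by
    have hpow : p ^ (finrank (ZMod p) V) ≡ 2 ^ (finrank (ZMod p) V) [MOD 3] :=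
      Nat.ModEq.pow _ (by rw [Nat.ModEq, hp])
    have := (hpow.symm.trans hmod)
    simpa [Nat.ModEq] using this
  exact aux_two_pow_mod_three h2r


/-- If `p ≡ 2 (mod 3)` is prime and `K` is a Galois cubic field (Galois over `ℚ` with
Galois group of order 3, hence cyclic), then the `p`-rank of the class group of `K`,
`dim_{𝔽_p}(Cl(K)/p·Cl(K))`, is even.  Here `Cl(K)/p·Cl(K)` is realized as
`ZMod p ⊗[ℤ] Cl(K)`. -/
theorem stmt_0 (p : ℕ) [Fact p.Prime] (hp : p % 3 = 2)
    (K : Type) [Field K] [NumberField K] [IsGalois ℚ K]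
    (hcard : Nat.card (K ≃ₐ[ℚ] K) = 3) :
    Even (Module.finrank (ZMod p)
      (TensorProduct ℤ (ZMod p) (Additive (ClassGroup (𝓞 K))))) := by
  classical
  have hcardF : Fintype.card (K ≃ₐ[ℚ] K) = 3 := by
    rw [← Nat.card_eq_fintype_card]; exact hcard
  have hrank : Module.finrank ℤ (𝓞 K) = 3 := by
    rw [RingOfIntegers.rank, ← IsGalois.card_aut_eq_finrank ℚ K, hcard]
  haveI : Fact (Nat.Prime 3) := ⟨by norm_num⟩
  obtain ⟨σ, hσ⟩ := exists_prime_orderOf_dvd_card 3 (by rw [hcardF])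
  have hσ3 : σ ^ 3 = 1 := by rw [← hσ]; exact pow_orderOf_eq_one σ
  set Cl := Additive (ClassGroup (𝓞 K)) with hCl
  let f : Cl →+ Cl := AddMonoidHom.mk' (fun a => Additive.ofMul (gmap K σ a.toMul))
    (fun a b => congrArg Additive.ofMul (gmap_mul K σ a.toMul b.toMul))
  have hf_rel : ∀ a : Cl, a + f a + f (f a) = 0 :=
    fun a => congrArg Additive.ofMul (gmap_rel K hrank hcard σ hσ a.toMul)
  have hf_tri : ∀ a : Cl, f (f (f a)) = a :=
    fun a => congrArg Additive.ofMul (gmap_triple K σ hσ3 a.toMul)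
  set flin : Cl →ₗ[ℤ] Cl := f.toIntLinearMap with hflin
  have h3 : flin ∘ₗ (flin ∘ₗ flin) = LinearMap.id := LinearMap.ext fun a => hf_tri a
  have hrel : (LinearMap.id + flin + flin ∘ₗ flin : Cl →ₗ[ℤ] Cl) = 0 :=
    LinearMap.ext fun a => hf_rel a
  set S : TensorProduct ℤ (ZMod p) Cl →ₗ[ZMod p] TensorProduct ℤ (ZMod p) Cl :=
    LinearMap.baseChange (ZMod p) flin with hS
  have hS3 : S ∘ₗ (S ∘ₗ S) = LinearMap.id := by
    rw [hS, ← LinearMap.baseChange_comp, ← LinearMap.baseChange_comp, h3,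
      LinearMap.baseChange_id]
  have hbc0 : LinearMap.baseChange (ZMod p) (0 : Cl →ₗ[ℤ] Cl) = 0 := by
    ext v
    simp
  have hSrel : LinearMap.id + S + S ∘ₗ S = 0 := by
    have := congrArg (LinearMap.baseChange (ZMod p)) hrel
    rw [LinearMap.baseChange_add, LinearMap.baseChange_add, LinearMap.baseChange_id,
      LinearMap.baseChange_comp, hbc0] at this
    rw [hS]
    exact this
  haveI : Finite (TensorProduct ℤ (ZMod p) Cl) := Module.finite_of_finite (ZMod p)
  exact aux_even_finrank p hp _ S hS3 hSrel
end

section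
/- Let G be a finite group whose Sylow p-subgroup is cyclic. Then the Sylow p-subgroup of the Schur multiplier H₂(G, ℤ) is trivial. -/
open groupCohomology Finset

section Aux

variable {M : Type} [AddCommGroup M]

/-- H² of a finite cyclic group with coefficients in `ℚ/ℤ` (trivial action) vanishes:
every 2-cocycle is a coboundary. -/
theorem cyclic_cocycle_is_coboundary {P : Type} [Group P] [Finite P] (hP : IsCyclic P)
    (f : P → P → AddCircle (1 : ℚ))
    (hf : ∀ x y z : P, f (x * y) z + f x y = f y z + f x (y * z)) :
    ∃ u : P → AddCircle (1 : ℚ), ∀ a b : P, f a b = u b - u (a * b) + u a := by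
  classical
  obtain ⟨c, hc⟩ := hP.exists_generator
  obtain ⟨m, hm⟩ : ∃ m, m = orderOf c := ⟨_, rfl⟩
  have hm0 : 0 < m := hm ▸ orderOf_pos c
  -- normal form for elements
  have hsur : ∀ x : P, ∃ i : ℕ, i < m ∧ c ^ i = x := by
    intro x
    obtain ⟨k, hk⟩ := Subgroup.mem_zpowers_iff.1 (hc x)
    have h1 : (0 : ℤ) ≤ k % (m : ℤ) := Int.emod_nonneg k (by exact_mod_cast hm0.ne')
    have h2 : k % (m : ℤ) < (m : ℤ) := Int.emod_lt_of_pos k (by exact_mod_cast hm0)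
    refine ⟨(k % (m : ℤ)).toNat, by omega, ?_⟩
    rw [← zpow_natCast, Int.toNat_of_nonneg h1, hm, zpow_mod_orderOf, hk]
  -- f x 1 = f 1 1
  have hone : ∀ x : P, f x 1 = f 1 1 := by
    intro x
    have := hf x 1 1
    simp only [mul_one, one_mul] at this
    exact add_right_cancel ((add_comm (f x 1) (f x 1)).trans this)
  set F : ℕ → AddCircle (1 : ℚ) := fun i => ∑ j ∈ range i, f (c ^ j) c with hF
  have hshift : ∀ i k : ℕ, F (i + k) = F i + ∑ j ∈ range k, f (c ^ (i + j)) c := by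
    intro i k
    simp only [hF]
    exact Finset.sum_range_add (fun j => f (c ^ j) c) i k
  have hkey : ∀ (x : P) (k : ℕ),
      f x (c ^ k) = (∑ j ∈ range k, (f (x * c ^ j) c - f (c ^ j) c)) + f 1 1 := by
    intro x k
    induction k with
    | zero => simpa using hone x
    | succ k ih =>
      have h := hf x (c ^ k) c
      rw [pow_succ]
      have h2 : f x (c ^ k * c) = f (x * c ^ k) c + f x (c ^ k) - f (c ^ k) c :=
        eq_sub_of_add_eq' h.symm
      rw [h2, ih, sum_range_succ]; abel
  have hkey2 : ∀ i k : ℕ, f (c ^ i) (c ^ k) = F (i + k) - F i - F k + f 1 1 := by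
    intro i k
    rw [hkey (c ^ i) k, hshift i k]
    have : ∀ j ∈ range k, f (c ^ i * c ^ j) c - f (c ^ j) c
        = f (c ^ (i + j)) c - f (c ^ j) c := by
      intro j _; rw [← pow_add]
    rw [sum_congr rfl this, sum_sub_distrib, hF]
    abel
  -- periodicity
  have hper : ∀ j : ℕ, F (m + j) = F m + F j := by
    intro j
    induction j with
    | zero => simp [hF]
    | succ j ih =>
      have hc1 : c ^ (m + j) = c ^ j := by
        rw [pow_add, hm, pow_orderOf_eq_one, one_mul]
      have e1 : F (m + (j + 1)) = F (m + j) + f (c ^ (m + j)) c := by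
        simp only [hF, ← add_assoc]
        exact sum_range_succ _ _
      have e2 : F (j + 1) = F j + f (c ^ j) c := by
        simp only [hF]
        exact sum_range_succ _ _
      rw [e1, e2, ih, hc1]; abel
  -- divide F m by m
  set a : AddCircle (1 : ℚ) := DivisibleBy.div (F m) (m : ℤ) with ha
  have ham : m • a = F m := by
    have := DivisibleBy.div_cancel (α := ℤ) (F m) (n := (m : ℤ)) (by exact_mod_cast hm0.ne')
    rwa [← ha, natCast_zsmul] at this
  -- index function
  set ind : P → ℕ := fun x => (hsur x).choose with hind
  have hind1 : ∀ x, ind x < m := fun x => (hsur x).choose_spec.1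
  have hind2 : ∀ x, c ^ ind x = x := fun x => (hsur x).choose_spec.2
  refine ⟨fun x => (ind x) • a - F (ind x) + f 1 1, fun x y => ?_⟩
  dsimp only
  set i := ind x with hidef
  set k := ind y with hkdef
  set l := ind (x * y) with hldef
  have hx : c ^ i = x := hind2 x
  have hy : c ^ k = y := hind2 y
  have hl : c ^ l = x * y := hind2 (x * y)
  have h1 : i < m := hind1 x
  have h2 : k < m := hind1 y
  have h3 : l < m := hind1 (x * y)
  clear_value i k l
  have hmod : (i + k) % m = l := by
    have hpow : c ^ (i + k) = c ^ l := by rw [pow_add, hx, hy, hl]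
    have hmeq : (i + k) % m = l % m := by
      rw [hm]
      exact pow_eq_pow_iff_modEq.1 hpow
    rwa [Nat.mod_eq_of_lt h3] at hmeq
  have hcase : i + k = l ∨ i + k = m + l := by
    rcases Nat.lt_or_ge (i + k) m with hlt | hge
    · left; rw [← hmod, Nat.mod_eq_of_lt hlt]
    · right
      have hlm : l = i + k - m := by
        rw [← hmod, Nat.mod_eq_sub_mod hge, Nat.mod_eq_of_lt (by omega)]
      omega
  have hFl : F (i + k) + l • a = F l + (i + k) • a := by
    rcases hcase with hc' | hc'
    · rw [hc']
    · rw [hc', hper l, add_nsmul, ham]; abel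
  have hfxy : f x y = F (i + k) - F i - F k + f 1 1 := by
    rw [← hx, ← hy, hkey2]
  rw [hfxy]
  have hFik : F (i + k) = F l + (i + k) • a - l • a := by rw [← hFl]; abel
  rw [hFik, add_nsmul]
  abel
/-- Transfer argument: if a 2-cocycle on `G` restricts to a coboundary on a subgroup `P`,
then `P.index` times it is a coboundary on `G`. -/
theorem transfer_coboundary {G : Type} [Group G] [Finite G] (P : Subgroup G)
    (f : G → G → M)
    (hf : ∀ x y z : G, f (x * y) z + f x y = f y z + f x (y * z))
    (u : P → M) (hu : ∀ a b : P, f a b = u b - u (a * b) + u a) :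
    ∃ w : G → M, ∀ g h : G, P.index • f g h = w h - w (g * h) + w g := by
  classical
  haveI : Fintype (G ⧸ P) := Fintype.ofFinite _
  set σ : G ⧸ P → G := Quotient.out with hσ
  have hmem : ∀ (g : G) (q : G ⧸ P), (σ (g • q))⁻¹ * (g * σ q) ∈ P := by
    intro g q
    rw [← QuotientGroup.eq]
    rw [hσ, QuotientGroup.out_eq']
    have := MulAction.Quotient.mk_smul_out P g q
    rw [smul_eq_mul] at this
    exact this.symm
  set π : G → G ⧸ P → P := fun g q => ⟨(σ (g • q))⁻¹ * (g * σ q), hmem g q⟩ with hπdef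
  have hπcoe : ∀ g q, (π g q : G) = (σ (g • q))⁻¹ * (g * σ q) := fun g q => rfl
  have hπmul : ∀ (g : G) (q : G ⧸ P), g * σ q = σ (g • q) * (π g q : G) := by
    intro g q
    rw [hπcoe]; group
  have hπ : ∀ (g h : G) (q : G ⧸ P), π (g * h) q = π g (h • q) * π h q := by
    intro g h q
    apply Subtype.ext
    push_cast [hπcoe]
    rw [mul_smul]
    group
  -- the per-coset identity
  have hper : ∀ (g h : G) (q : G ⧸ P),
      f (π g (h • q) : G) (π h q : G) - f g h =
        (f (σ (h • q)) (π h q : G) - f h (σ q))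
          - (f (σ (g • h • q)) ((π g (h • q) : G) * (π h q : G)) - f (g * h) (σ q))
          + (f (σ (g • h • q)) (π g (h • q) : G) - f g (σ (h • q))) := by
    intro g h q
    set s0 := σ q
    set s1 := σ (h • q)
    set s2 := σ (g • h • q)
    set A := (π g (h • q) : G)
    set B := (π h q : G)
    have hga : g * s1 = s2 * A := hπmul g (h • q)
    have hhb : h * s0 = s1 * B := hπmul h q
    have e1 : f A B = f (g * s1) B + f s2 A - f s2 (A * B) := by
      rw [eq_sub_iff_add_eq, hga]; exact (hf s2 A B).symm
    have e2 : f (g * s1) B = f s1 B + f g (h * s0) - f g s1 := by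
      rw [eq_sub_iff_add_eq, hhb]; exact hf g s1 B
    have e3 : f g (h * s0) = f (g * h) s0 + f g h - f h s0 := by
      rw [eq_sub_iff_add_eq, add_comm]; exact (hf g h s0).symm
    rw [e1, e2, e3]
    abel
  set w : G → M := fun g => ∑ q : G ⧸ P, (f (σ (g • q)) (π g q : G) - f g (σ q)) with hw
  set v : G → M := fun g => ∑ q : G ⧸ P, u (π g q) with hv
  have hreidx : ∀ (g h : G) (T : G ⧸ P → M),
      (∑ q : G ⧸ P, T (h • q)) = ∑ q : G ⧸ P, T q := by
    intro g h T
    exact Fintype.sum_bijective (fun q => h • q) (MulAction.bijective h) _ _ (fun q => rfl)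
  have hcard : P.index • (1 : ℕ) = Fintype.card (G ⧸ P) := by
    rw [smul_eq_mul, mul_one, Subgroup.index, Nat.card_eq_fintype_card]
  -- the main summed identity
  have hsum : ∀ g h : G,
      (∑ q : G ⧸ P, f (π g (h • q) : G) (π h q : G)) - P.index • f g h
        = w h - w (g * h) + w g := by
    intro g h
    have h1 : P.index • f g h = ∑ _q : G ⧸ P, f g h := by
      rw [sum_const, card_univ, Subgroup.index, Nat.card_eq_fintype_card]
    rw [h1, ← sum_sub_distrib]
    have h2 : ∀ q : G ⧸ P,
        f (π g (h • q) : G) (π h q : G) - f g h =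
          (f (σ (h • q)) (π h q : G) - f h (σ q))
            - (f (σ ((g * h) • q)) (π (g * h) q : G) - f (g * h) (σ q))
            + (f (σ (g • h • q)) (π g (h • q) : G) - f g (σ (h • q))) := by
      intro q
      rw [hper g h q, hπ g h q, mul_smul]
      push_cast
      rfl
    rw [sum_congr rfl (fun q _ => h2 q), sum_add_distrib, sum_sub_distrib]
    have h3 : (∑ q : G ⧸ P, (f (σ (g • h • q)) (π g (h • q) : G) - f g (σ (h • q))))
        = w g := by
      rw [hw]
      exact hreidx g h (fun q => f (σ (g • q)) (π g q : G) - f g (σ q))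
    rw [h3, hw]
  -- corestriction of the coboundary
  have hcor : ∀ g h : G,
      (∑ q : G ⧸ P, f (π g (h • q) : G) (π h q : G)) = v h - v (g * h) + v g := by
    intro g h
    have h2 : ∀ q : G ⧸ P,
        f (π g (h • q) : G) (π h q : G)
          = u (π h q) - u (π (g * h) q) + u (π g (h • q)) := by
      intro q
      rw [hπ g h q]
      exact hu _ _
    rw [sum_congr rfl (fun q _ => h2 q), sum_add_distrib, sum_sub_distrib]
    have h3 : (∑ q : G ⧸ P, u (π g (h • q))) = v g := by
      rw [hv]
      exact hreidx g h (fun q => u (π g q))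
    rw [h3, hv]
  refine ⟨fun g => v g - w g, fun g h => ?_⟩
  have h1 := hsum g h
  rw [hcor g h] at h1
  have h2 : P.index • f g h = (v h - v (g * h) + v g) - (w h - w (g * h) + w g) := by
    rw [← h1]; abel
  rw [h2]; dsimp only; abel

end Aux

/-- If the Sylow `p`-subgroups of a finite group `G` are cyclic, then the Sylow
`p`-subgroup of the Schur multiplier `H₂(G, ℤ)` is trivial.  Since `G` is finite, the
Schur multiplier is canonically isomorphic to `H²(G, ℚ/ℤ)` with trivial coefficients,
which is how we formalize it; triviality of its Sylow `p`-subgroup is expressed as the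
absence of `p`-torsion. -/
theorem stmt_14 (G : Type) [Group G] [Finite G] (p : ℕ) [Fact p.Prime]
    (h : ∀ P : Sylow p G, IsCyclic P) :
    ∀ x : (groupCohomology (Rep.trivial ℤ G (AddCircle (1 : ℚ))) 2),
      p • x = 0 → x = 0 := by
  classical
  set A := Rep.trivial ℤ G (AddCircle (1 : ℚ)) with hA
  intro x hx
  set P : Sylow p G := Classical.arbitrary (Sylow p G) with hPdef
  have hpn : ¬ (p ∣ (P : Subgroup G).index) := Sylow.not_dvd_index P
  set n := (P : Subgroup G).index with hn
  -- key: n • x = 0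
  have hnx : n • x = 0 := by
    refine groupCohomology.H2_induction_on (C := fun x => n • x = 0) x (fun f => ?_)
    beta_reduce
    rw [← map_nsmul, groupCohomology.H2π_eq_zero_iff]
    -- the cocycle condition
    have hfc : ∀ a b c : G, f.1 (a * b, c) + f.1 (a, b) = f.1 (b, c) + f.1 (a, b * c) := by
      intro a b c
      exact (groupCohomology.mem_cocycles₂_iff (A := A) f.1).1 f.2 a b c
    -- restriction to the Sylow subgroup is a coboundary (cyclic + divisible coefficients)
    have hcyc : IsCyclic (P : Subgroup G) := h P
    obtain ⟨u, hu⟩ := cyclic_cocycle_is_coboundary hcyc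
      (fun a b : (P : Subgroup G) => f.1 ((a : G), (b : G)))
      (fun a b c => by push_cast; exact hfc a b c)
    obtain ⟨w, hw⟩ := transfer_coboundary (P : Subgroup G)
      (fun a b : G => f.1 (a, b)) hfc u hu
    refine ⟨w, funext fun gh => ?_⟩
    exact (hw gh.1 gh.2).symm
  -- Bezout
  have hcop : Nat.Coprime p n := (Nat.Prime.coprime_iff_not_dvd Fact.out).2 hpn
  obtain ⟨a, b, hab⟩ := (Nat.isCoprime_iff_coprime.2 hcop)
  calc x = ((a * p + b * n : ℤ)) • x := by rw [hab, one_smul]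
    _ = a • ((p : ℤ) • x) + b • ((n : ℤ) • x) := by rw [add_zsmul, mul_zsmul, mul_zsmul]
    _ = 0 := by rw [natCast_zsmul, natCast_zsmul, hx, hnx, zsmul_zero, zsmul_zero, add_zero]
end
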